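/- Let τ, σ ∈ ℂ with Im τ > 0 and Im σ > 0, and let z ∈ ℂ with z ∉ {jτ + kσ + l : j, k, l ∈ ℤ}. Then Γ(z,τ,σ) · Γ(τ+σ−z,τ,σ) = 1. (With the convention extending Γ to negative imaginary parts by Γ(z,τ,σ) = 1/Γ(z−τ,−τ,σ), this is the inversion relation Γ(z,τ,σ)·Γ(−z,−σ,−τ) = 1.) -/

import Mathlib

namespace EGG

/-- Integer vectors in `ℤ³`. -/
abbrev V : Type := Fin 3 → ℤ

/-- gcd of the three coordinates. -/
def gcd3 (v : V) : ℕ := Nat.gcd (Nat.gcd (v 0).natAbs (v 1).natAbs) (v 2).natAbs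

/-- A vector of `ℤ³` is primitive if it is nonzero and the gcd of its coordinates is 1. -/
def Primitive (a : V) : Prop := a ≠ 0 ∧ gcd3 a = 1

/-- Cross product of integer vectors. -/
def cross (a b : V) : V :=
  ![a 1 * b 2 - a 2 * b 1, a 2 * b 0 - a 0 * b 2, a 0 * b 1 - a 1 * b 0]

/-- Dot product of integer vectors. -/
def dotZ (α a : V) : ℤ := α 0 * a 0 + α 1 * a 1 + α 2 * a 2

/-- Dot product of a rational vector with an integer vector. -/
def dotQ (α : Fin 3 → ℚ) (a : V) : ℚ := α 0 * (a 0 : ℚ) + α 1 * (a 1 : ℚ) + α 2 * (a 2 : ℚ)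

/-- Dot product of a real vector with an integer vector. -/
def dotR (l : Fin 3 → ℝ) (a : V) : ℝ := l 0 * (a 0 : ℝ) + l 1 * (a 1 : ℝ) + l 2 * (a 2 : ℝ)

/-- The pairing `α(x) = α₁x₁+α₂x₂+α₃x₃` of a rational vector with a complex vector. -/
noncomputable def pairQ (α : Fin 3 → ℚ) (x : Fin 3 → ℂ) : ℂ :=
  (α 0 : ℂ) * x 0 + (α 1 : ℂ) * x 1 + (α 2 : ℂ) * x 2

/-- The pairing `α(x) = α₁x₁+α₂x₂+α₃x₃` of an integer vector with a complex vector. -/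
noncomputable def pairZ (α : V) (x : Fin 3 → ℂ) : ℂ :=
  (α 0 : ℂ) * x 0 + (α 1 : ℂ) * x 1 + (α 2 : ℂ) * x 2

/-- The canonical map `ℤ³ → ℚ³`. -/
def toQ (a : V) : Fin 3 → ℚ := fun i => (a i : ℚ)

/-- Determinant of the 3×3 matrix with rows `α, β, δ`. -/
def det3Q (α β δ : Fin 3 → ℚ) : ℚ := Matrix.det (Matrix.of ![α, β, δ])

/-- `(α, β)` is an oriented basis of the plane `H(a) = {α : α·a = 0}`. -/
def IsOrientedBasis (a : V) (α β : Fin 3 → ℚ) : Prop :=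
  dotQ α a = 0 ∧ dotQ β a = 0 ∧
  LinearIndependent ℚ ![α, β] ∧
  (∀ δ : Fin 3 → ℚ, dotQ δ a = 0 → ∃ p q : ℚ, δ = p • α + q • β) ∧
  (∀ δ : Fin 3 → ℚ, 0 < dotQ δ a → 0 < det3Q α β δ)

/-- The domain `U⁺_a ⊆ ℂ³`. -/
noncomputable def UPlus (a : V) : Set (Fin 3 → ℂ) :=
  {x | ∃ α β : Fin 3 → ℚ, IsOrientedBasis a α β ∧
    0 < (pairQ α x * (starRingEnd ℂ) (pairQ β x)).im}

/-- `γ` is the direction vector of the wedge `(a,b)`: `γ` is primitive and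
`a × b = s • γ` for some integer `s ≥ 1` (the modulus). -/
def IsDirVec (a b γ : V) : Prop :=
  Primitive γ ∧ ∃ s : ℤ, 1 ≤ s ∧ cross a b = s • γ

/-- `C₊₋(a,b) = {δ ∈ ℤ³ : δ·a > 0, δ·b ≤ 0}`. -/
def Cpm (a b : V) : Set V := {δ | 0 < dotZ δ a ∧ dotZ δ b ≤ 0}

/-- `C₋₊(a,b) = {δ ∈ ℤ³ : δ·a ≤ 0, δ·b > 0}`. -/
def Cmp (a b : V) : Set V := {δ | dotZ δ a ≤ 0 ∧ 0 < dotZ δ b}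

/-- The factor `1 - e^{-2πi(δ(x)-w)/γ(x)}` appearing in the numerator of `Γ_{a,b}`. -/
noncomputable def gammaFacP (γ : V) (x : Fin 3 → ℂ) (w : ℂ) (δ : V) : ℂ :=
  1 - Complex.exp (-(2 * (Real.pi : ℂ) * Complex.I) * (pairZ δ x - w) / pairZ γ x)

/-- The factor `1 - e^{2πi(δ(x)-w)/γ(x)}` appearing in the denominator of `Γ_{a,b}`. -/
noncomputable def gammaFacM (γ : V) (x : Fin 3 → ℂ) (w : ℂ) (δ : V) : ℂ :=
  1 - Complex.exp ((2 * (Real.pi : ℂ) * Complex.I) * (pairZ δ x - w) / pairZ γ x)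

/-- The gamma function `Γ_{a,b}(w,x)` of the wedge `(a,b)` with direction vector `γ`:
the products run over the sets `C₊₋(a,b)/ℤγ` and `C₋₊(a,b)/ℤγ`; each factor is evaluated
on the chosen representative `Quotient.out q` of the class `q` (the factors are constant
on classes modulo `ℤγ`). -/
noncomputable def GammaWedge (a b γ : V) (w : ℂ) (x : Fin 3 → ℂ) : ℂ :=
  if a = b then 1 else
    (∏' q : (QuotientAddGroup.mk '' Cpm a b : Set (V ⧸ AddSubgroup.zmultiples γ)),
      gammaFacP γ x w (Quotient.out (q : V ⧸ AddSubgroup.zmultiples γ))) /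
    (∏' q : (QuotientAddGroup.mk '' Cmp a b : Set (V ⧸ AddSubgroup.zmultiples γ)),
      gammaFacM γ x w (Quotient.out (q : V ⧸ AddSubgroup.zmultiples γ)))

/-- The theta function `θ₀(z,τ)`, for `Im τ > 0`. -/
noncomputable def theta0 (z τ : ℂ) : ℂ :=
  ∏' j : ℕ, ((1 - Complex.exp (2 * (Real.pi : ℂ) * Complex.I * (((j : ℂ) + 1) * τ - z))) *
    (1 - Complex.exp (2 * (Real.pi : ℂ) * Complex.I * ((j : ℂ) * τ + z))))

/-- The elliptic gamma function `Γ(z,τ,σ)`, for `Im τ > 0` and `Im σ > 0`. -/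
noncomputable def ellGamma (z τ σ : ℂ) : ℂ :=
  (∏' p : ℕ × ℕ, (1 - Complex.exp (2 * (Real.pi : ℂ) * Complex.I *
      (((p.1 : ℂ) + 1) * τ + ((p.2 : ℂ) + 1) * σ - z)))) /
  (∏' p : ℕ × ℕ, (1 - Complex.exp (2 * (Real.pi : ℂ) * Complex.I *
      ((p.1 : ℂ) * τ + (p.2 : ℂ) * σ + z))))

/-- The elliptic gamma function `Γ̃(z,τ,σ)` in the domain `Im τ < 0 < Im σ`. -/
noncomputable def ellGammaTilde (z τ σ : ℂ) : ℂ :=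
  (∏' p : ℕ × ℕ, (1 - Complex.exp (2 * (Real.pi : ℂ) * Complex.I *
      (z - ((p.1 : ℂ) + 1) * τ + (p.2 : ℂ) * σ)))) /
  (∏' p : ℕ × ℕ, (1 - Complex.exp (2 * (Real.pi : ℂ) * Complex.I *
      (-z - (p.1 : ℂ) * τ + ((p.2 : ℂ) + 1) * σ))))

/-- The polynomial `P₂`. -/
noncomputable def P2 (w x₁ x₂ : ℂ) : ℂ :=
  (w ^ 2 - (x₁ + x₂) * w + (x₁ ^ 2 + x₂ ^ 2 + 3 * x₁ * x₂) / 6) / (x₁ * x₂)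

/-- The Bernoulli polynomial `P₃ = B₃,₃`. -/
noncomputable def P3 (w x₁ x₂ x₃ : ℂ) : ℂ :=
  w ^ 3 / (x₁ * x₂ * x₃) - (3 * (x₁ + x₂ + x₃) / (2 * (x₁ * x₂ * x₃))) * w ^ 2
    + ((x₁ ^ 2 + x₂ ^ 2 + x₃ ^ 2 + 3 * x₁ * x₂ + 3 * x₂ * x₃ + 3 * x₁ * x₃)
        / (2 * (x₁ * x₂ * x₃))) * w
    - (1 / 4) * (x₁ + x₂ + x₃) * (1 / x₁ + 1 / x₂ + 1 / x₃)

/-- The real polynomial `R₃ = B₂,₃`. -/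
noncomputable def R3 (ζ t s : ℝ) : ℝ :=
  ζ ^ 3 / (t * s) - (3 / 2) * (1 / t + 1 / s) * ζ ^ 2
    + (t / (2 * s) + s / (2 * t) + 3 / 2) * ζ - (t + s) / 4

/-- The hermitian weight `h₂(z,τ)` for the theta bundle. -/
noncomputable def h2 (z τ : ℂ) : ℝ :=
  Real.exp (-2 * Real.pi * z.im ^ 2 / τ.im + 2 * Real.pi * (z - τ / 6).im)

/-- The hermitian weight `h₃(z,τ,σ)`. -/
noncomputable def h3 (z τ σ : ℂ) : ℝ :=
  Real.exp (-(2 * Real.pi / 3) * R3 z.im τ.im σ.im)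

/-- The finite product of theta functions `Δ` with parameters `A₁ = α₁(x)`, `A₂ = α₂(x)`,
`A₃ = α₃(x)` and first framing coordinate `m = μ(a)`:
`∏_{j=0}^{m-1} θ₀((w+jA₁)/A₃, A₂/A₃)` for `m ≥ 0` and
`(∏_{j=m}^{-1} θ₀((w+jA₁)/A₃, A₂/A₃))⁻¹` for `m < 0`. -/
noncomputable def DeltaInt (w A₁ A₂ A₃ : ℂ) (m : ℤ) : ℂ :=
  if 0 ≤ m then
    ∏ j ∈ Finset.range m.toNat, theta0 ((w + (j : ℂ) * A₁) / A₃) (A₂ / A₃)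
  else
    (∏ j ∈ Finset.range (-m).toNat, theta0 ((w - ((j : ℂ) + 1) * A₁) / A₃) (A₂ / A₃))⁻¹




section Aux
open Complex Real

private lemma aux_summable_log {ι : Type*} {f : ι → ℂ} (hs : Summable fun i => ‖f i‖) :
    Summable fun i => Complex.log (1 - f i) := by
  have h0 : ∀ᶠ i in Filter.cofinite, ‖f i‖ < 1/2 :=
    hs.tendsto_cofinite_zero.eventually (gt_mem_nhds (by norm_num : (0:ℝ) < 1/2))
  have hfin : {i | ¬ ‖f i‖ < 1/2}.Finite := Filter.eventually_cofinite.mp h0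
  rw [← hfin.summable_compl_iff]
  have hsub : Summable fun i : ({i | ¬ ‖f i‖ < 1/2}ᶜ : Set ι) => (3/2 : ℝ) * ‖f i.1‖ :=
    (hs.mul_left (3/2)).subtype _
  apply Summable.of_norm_bounded hsub
  intro i
  have hlt : ‖f i.1‖ < 1/2 := not_not.mp i.2
  have hle : ‖-f i.1‖ ≤ 1/2 := by rw [norm_neg]; exact hlt.le
  calc ‖Complex.log (1 - f i.1)‖ = ‖Complex.log (1 + -f i.1)‖ := by rw [sub_eq_add_neg]
    _ ≤ 3/2 * ‖f i.1‖ := by simpa [norm_neg] using Complex.norm_log_one_add_half_le_self hle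

private lemma tprod_one_sub_ne_zero {ι : Type*} {f : ι → ℂ} (hs : Summable fun i => ‖f i‖)
    (h1 : ∀ i, 1 - f i ≠ 0) : (∏' i, (1 - f i)) ≠ 0 := by
  have h2 := Complex.cexp_tsum_eq_tprod (f := fun i => 1 - f i) h1 (aux_summable_log hs)
  rw [← h2]
  exact Complex.exp_ne_zero _

private lemma summable_norm_aux {a b : ℝ} (c0 : ℝ) (ha : 0 < a) (hb : 0 < b) :
    Summable fun p : ℕ × ℕ => Real.exp (-(2*Real.pi) * ((p.1 : ℝ) * a + (p.2 : ℝ) * b + c0)) := by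
  have key : ∀ p : ℕ × ℕ, Real.exp (-(2*Real.pi) * ((p.1 : ℝ) * a + (p.2 : ℝ) * b + c0))
      = (Real.exp (-(2*Real.pi) * c0) * Real.exp (-(2*Real.pi) * a) ^ p.1)
        * Real.exp (-(2*Real.pi) * b) ^ p.2 := by
    intro p
    rw [← Real.exp_nat_mul, ← Real.exp_nat_mul, ← Real.exp_add, ← Real.exp_add]
    ring_nf
  have hpi : 0 < 2 * Real.pi := by positivity
  have hra : Real.exp (-(2*Real.pi) * a) < 1 := Real.exp_lt_one_iff.mpr (by nlinarith)
  have hrb : Real.exp (-(2*Real.pi) * b) < 1 := Real.exp_lt_one_iff.mpr (by nlinarith)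
  have h1 : Summable fun j : ℕ => Real.exp (-(2*Real.pi) * c0) * Real.exp (-(2*Real.pi) * a) ^ j :=
    (summable_geometric_of_lt_one (Real.exp_nonneg _) hra).mul_left _
  have h2 : Summable fun k : ℕ => Real.exp (-(2*Real.pi) * b) ^ k :=
    summable_geometric_of_lt_one (Real.exp_nonneg _) hrb
  have h3 := h1.mul_of_nonneg h2 (fun j => by positivity) (fun k => by positivity)
  exact h3.congr fun p => (key p).symm

private lemma re_two_pi_I_mul (u : ℂ) :
    (2 * (Real.pi : ℂ) * Complex.I * u).re = -(2 * Real.pi) * u.im := by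
  simp [Complex.mul_re, Complex.mul_im]

end Aux

/-- the inversion relation `Γ(z,τ,σ)·Γ(τ+σ−z,τ,σ) = 1`. -/
theorem statement17 (z τ σ : ℂ) (hτ : 0 < τ.im) (hσ : 0 < σ.im)
    (hz : ∀ j k l : ℤ, z ≠ (j : ℂ) * τ + (k : ℂ) * σ + (l : ℂ)) :
    ellGamma z τ σ * ellGamma (τ + σ - z) τ σ = 1 := by
  set F : ℕ × ℕ → ℂ := fun p => Complex.exp (2 * (Real.pi : ℂ) * Complex.I *
      (((p.1 : ℂ) + 1) * τ + ((p.2 : ℂ) + 1) * σ - z)) with hF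
  set G : ℕ × ℕ → ℂ := fun p => Complex.exp (2 * (Real.pi : ℂ) * Complex.I *
      ((p.1 : ℂ) * τ + (p.2 : ℂ) * σ + z)) with hG
  have hsF : Summable fun p => ‖F p‖ := by
    apply (summable_norm_aux (τ.im + σ.im - z.im) hτ hσ).congr
    intro p
    have him : (((p.1 : ℂ) + 1) * τ + ((p.2 : ℂ) + 1) * σ - z).im
        = (p.1 : ℝ) * τ.im + (p.2 : ℝ) * σ.im + (τ.im + σ.im - z.im) := by
      simp [Complex.add_im, Complex.sub_im, Complex.mul_im]
      ring
    rw [hF]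
    simp only [Complex.norm_exp, re_two_pi_I_mul, him]
  have hsG : Summable fun p => ‖G p‖ := by
    apply (summable_norm_aux z.im hτ hσ).congr
    intro p
    have him : ((p.1 : ℂ) * τ + (p.2 : ℂ) * σ + z).im
        = (p.1 : ℝ) * τ.im + (p.2 : ℝ) * σ.im + z.im := by
      simp [Complex.add_im, Complex.mul_im]
    rw [hG]
    simp only [Complex.norm_exp, re_two_pi_I_mul, him]
  have h1F : ∀ p : ℕ × ℕ, 1 - F p ≠ 0 := by
    intro p h
    have h' : Complex.exp (2 * (Real.pi : ℂ) * Complex.I *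
        (((p.1 : ℂ) + 1) * τ + ((p.2 : ℂ) + 1) * σ - z)) = 1 := (sub_eq_zero.mp h).symm
    obtain ⟨n, hn⟩ := Complex.exp_eq_one_iff.mp h'
    have hu : ((p.1 : ℂ) + 1) * τ + ((p.2 : ℂ) + 1) * σ - z = (n : ℂ) :=
      mul_left_cancel₀ Complex.two_pi_I_ne_zero (hn.trans (mul_comm _ _))
    apply hz ((p.1 : ℤ) + 1) ((p.2 : ℤ) + 1) (-n)
    push_cast
    linear_combination -hu
  have h1G : ∀ p : ℕ × ℕ, 1 - G p ≠ 0 := by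
    intro p h
    have h' : Complex.exp (2 * (Real.pi : ℂ) * Complex.I *
        ((p.1 : ℂ) * τ + (p.2 : ℂ) * σ + z)) = 1 := (sub_eq_zero.mp h).symm
    obtain ⟨n, hn⟩ := Complex.exp_eq_one_iff.mp h'
    have hu : (p.1 : ℂ) * τ + (p.2 : ℂ) * σ + z = (n : ℂ) :=
      mul_left_cancel₀ Complex.two_pi_I_ne_zero (hn.trans (mul_comm _ _))
    apply hz (-(p.1 : ℤ)) (-(p.2 : ℤ)) n
    push_cast
    linear_combination hu
  have hNne : (∏' p, (1 - F p)) ≠ 0 := tprod_one_sub_ne_zero hsF h1F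
  have hDne : (∏' p, (1 - G p)) ≠ 0 := tprod_one_sub_ne_zero hsG h1G
  have e1 : (fun p : ℕ × ℕ => (1 - Complex.exp (2 * (Real.pi : ℂ) * Complex.I *
      (((p.1 : ℂ) + 1) * τ + ((p.2 : ℂ) + 1) * σ - (τ + σ - z))))) = fun p => 1 - G p := by
    funext p
    rw [hG]
    congr 2
    ring
  have e2 : (fun p : ℕ × ℕ => (1 - Complex.exp (2 * (Real.pi : ℂ) * Complex.I *
      ((p.1 : ℂ) * τ + (p.2 : ℂ) * σ + (τ + σ - z))))) = fun p => 1 - F p := by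
    funext p
    rw [hF]
    congr 2
    ring
  unfold ellGamma
  rw [e1, e2]
  rw [div_mul_div_comm, mul_comm (∏' p, (1 - G p))]
  exact div_self (mul_ne_zero hNne hDne)

end EGG
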